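/- (Theorem 4.1, part 2: Lax–Friedrichs entropy set for a convex scalar conservation law.) Let f : ℝ → ℝ be C² with f''(u) > 0 for every u, let u_* satisfy f'(u_*) = 0, fix M > 0 and u_B ∈ [−M, M], and let λ > 0, Q ∈ (0,1) satisfy (λ/Q)·sup_{|w| ≤ 8M} |f'(w)| ≤ 1. For a convex entropy pair (U,F) set G(v,w) = ½(F(v) + F(w)) − (Q/λ)(U(w) − U(v)). Define E_Lax^entropy(u_B) = { u₀ ∈ ℝ : there exists v₁ ∈ [−M, M] such that G(u_B, v₁) ≥ F(u₀) for every convex entropy pair (U,F) }. Then E_Lax^entropy(u_B) ∩ [−M, M] = E^Riemann(u_B) ∩ [−M, M], where E^Riemann(u_B) = (−∞, u_B^*] ∪ {u_B} if u_B > u_* (u_B^* < u_* being the unique other solution of f(u_B^*) = f(u_B)), and E^Riemann(u_B) = (−∞, u_*] if u_B ≤ u_*. -/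

import Mathlib

/-- The set of admissible boundary values based on the discrete entropy
inequalities of the Lax–Friedrichs scheme with numerical entropy flux
`G(v,w) = ½(F(v)+F(w)) − (Q/λ)(U(w)−U(v))`: `u₀` is admissible iff there
exists `v₁ ∈ [−M,M]` such that `G(u_B, v₁) ≥ F(u₀)` for every convex entropy
pair `(U,F)` (`U` of class C² with `U'' ≥ 0`, `F` differentiable with
`F' = U' f'`). -/
def laxEntropySet (f : ℝ → ℝ) (lam Q M uB : ℝ) : Set ℝ :=
  { u₀ : ℝ | ∃ v₁ ∈ Set.Icc (-M) M, ∀ U F : ℝ → ℝ, ContDiff ℝ 2 U →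
      (∀ u, 0 ≤ deriv (deriv U) u) → Differentiable ℝ F →
      (∀ u, deriv F u = deriv U u * deriv f u) →
      F u₀ ≤ (F uB + F v₁) / 2 - Q / lam * (U v₁ - U uB) }


section LaxHelpers
open intervalIntegral Set

lemma contDiff_two_facts {g : ℝ → ℝ} (h : ContDiff ℝ 2 g) :
    Differentiable ℝ g ∧ Differentiable ℝ (deriv g) ∧ Continuous (deriv (deriv g)) := by
  rw [show (2 : WithTop ℕ∞) = 1 + 1 by norm_num] at h
  obtain ⟨hd, -, h1⟩ := contDiff_succ_iff_deriv.mp h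
  rw [contDiff_one_iff_deriv] at h1
  exact ⟨hd, h1.1, h1.2⟩

lemma rep_lemma {f U F : ℝ → ℝ} (hf : ContDiff ℝ 2 f) (hU : ContDiff ℝ 2 U)
    (hFd : Differentiable ℝ F) (hF' : ∀ u, deriv F u = deriv U u * deriv f u)
    {b Mr x : ℝ} (hbx : b ≤ x) (hxM : x ≤ Mr) :
    F x - F b = (∫ t in b..Mr, deriv (deriv U) t * (f (max x t) - f t))
      + deriv U b * (f x - f b) := by
  obtain ⟨hfd, hfd', hf''c⟩ := contDiff_two_facts hf
  obtain ⟨hUd, hUd', hU''c⟩ := contDiff_two_facts hU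
  have hcf : Continuous f := hfd.continuous
  have hcf' : Continuous (deriv f) := hfd'.continuous
  have hcU' : Continuous (deriv U) := hUd'.continuous
  -- Step 3 : integration by parts / constancy
  set G : ℝ → ℝ := fun y => F y - deriv U y * f y + ∫ t in b..y, deriv (deriv U) t * f t with hGdef
  have hG : ∀ y, HasDerivAt G 0 y := by
    intro y
    have h1 : HasDerivAt F (deriv U y * deriv f y) y := by
      rw [← hF' y]; exact (hFd y).hasDerivAt
    have h2 : HasDerivAt (fun y => deriv U y * f y)
        (deriv (deriv U) y * f y + deriv U y * deriv f y) y :=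
      ((hUd' y).hasDerivAt).mul ((hfd y).hasDerivAt)
    have h3 : HasDerivAt (fun y => ∫ t in b..y, deriv (deriv U) t * f t)
        (deriv (deriv U) y * f y) y :=
      ((hU''c.mul hcf).integral_hasStrictDerivAt b y).hasDerivAt
    have := (h1.sub h2).add h3
    exact this.congr_deriv (by ring)
  have hGconst : G x = G b :=
    is_const_of_deriv_eq_zero (fun y => (hG y).differentiableAt) (fun y => (hG y).deriv) x b
  have hGb : G b = F b - deriv U b * f b := by
    simp [hGdef]
  have step3 : F x - F b = deriv U x * f x - deriv U b * f b
      - ∫ t in b..x, deriv (deriv U) t * f t := by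
    have := hGconst
    rw [hGb] at this
    simp only [hGdef] at this
    linarith
  -- Step 1-2 : evaluate the max-integral
  have hint1 : IntervalIntegrable (fun t => deriv (deriv U) t * (f (max x t) - f t)) MeasureTheory.volume b x :=
    (hU''c.mul ((hcf.comp (continuous_const.max continuous_id)).sub hcf)).intervalIntegrable _ _
  have hint2 : IntervalIntegrable (fun t => deriv (deriv U) t * (f (max x t) - f t)) MeasureTheory.volume x Mr :=
    (hU''c.mul ((hcf.comp (continuous_const.max continuous_id)).sub hcf)).intervalIntegrable _ _
  have hsplit := integral_add_adjacent_intervals hint1 hint2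
  have h2zero : (∫ t in x..Mr, deriv (deriv U) t * (f (max x t) - f t)) = 0 := by
    have : EqOn (fun t => deriv (deriv U) t * (f (max x t) - f t)) (fun _ => (0:ℝ)) (uIcc x Mr) := by
      intro t ht
      rw [uIcc_of_le hxM] at ht
      simp [max_eq_right ht.1]
    rw [integral_congr this, integral_const]
    simp
  have h1eq : (∫ t in b..x, deriv (deriv U) t * (f (max x t) - f t))
      = (∫ t in b..x, deriv (deriv U) t * f x) - ∫ t in b..x, deriv (deriv U) t * f t := by
    rw [← integral_sub ((show Continuous fun t => deriv (deriv U) t * f x from hU''c.mul continuous_const).intervalIntegrable _ _)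
      ((show Continuous fun t => deriv (deriv U) t * f t from hU''c.mul hcf).intervalIntegrable _ _)]
    apply integral_congr
    intro t ht
    rw [uIcc_of_le hbx] at ht
    simp only []
    rw [max_eq_left ht.2]; ring
  have hU''int : (∫ t in b..x, deriv (deriv U) t) = deriv U x - deriv U b :=
    integral_deriv_eq_sub (fun t _ => hUd' t) (hU''c.intervalIntegrable _ _)
  have hconstmul : (∫ t in b..x, deriv (deriv U) t * f x)
      = (deriv U x - deriv U b) * f x := by
    rw [integral_mul_const, hU''int]
  have : (∫ t in b..Mr, deriv (deriv U) t * (f (max x t) - f t))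
      = (deriv U x - deriv U b) * f x - ∫ t in b..x, deriv (deriv U) t * f t := by
    rw [← hsplit, h2zero, h1eq, hconstmul]; ring
  rw [this, step3]
  ring

lemma key_identity {f U F : ℝ → ℝ} (hf : ContDiff ℝ 2 f) (hU : ContDiff ℝ 2 U)
    (hFd : Differentiable ℝ F) (hF' : ∀ u, deriv F u = deriv U u * deriv f u)
    {b Mr u₀ uB v₁ : ℝ} (α : ℝ)
    (h0 : u₀ ∈ Icc b Mr) (hB : uB ∈ Icc b Mr) (hv : v₁ ∈ Icc b Mr) :
    F u₀ - (F uB + F v₁) / 2 + α * (U v₁ - U uB)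
      = (∫ t in b..Mr, deriv (deriv U) t *
          (f (max u₀ t) - (f (max uB t) + f (max v₁ t)) / 2 + α * (max v₁ t - max uB t)))
        + deriv U b * (f u₀ - (f uB + f v₁) / 2 + α * (v₁ - uB)) := by
  obtain ⟨hfd, hfd', hf''c⟩ := contDiff_two_facts hf
  obtain ⟨hUd, hUd', hU''c⟩ := contDiff_two_facts hU
  have hcf : Continuous f := hfd.continuous
  have hid : ContDiff ℝ 2 (fun x : ℝ => x) := contDiff_id
  have hUid : ∀ u, deriv U u = deriv U u * deriv (fun x : ℝ => x) u := by
    intro u; simp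
  have r0 := rep_lemma hf hU hFd hF' h0.1 h0.2
  have rB := rep_lemma hf hU hFd hF' hB.1 hB.2
  have rv := rep_lemma hf hU hFd hF' hv.1 hv.2
  have rUB := rep_lemma hid hU hUd hUid hB.1 hB.2
  have rUv := rep_lemma hid hU hUd hUid hv.1 hv.2
  -- continuity of integrands
  have cmax : ∀ x : ℝ, Continuous fun t : ℝ => f (max x t) :=
    fun x => hcf.comp (continuous_const.max continuous_id)
  have cP : ∀ x : ℝ, Continuous fun t => deriv (deriv U) t * (f (max x t) - f t) :=
    fun x => hU''c.mul ((cmax x).sub hcf)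
  have cR : ∀ x : ℝ, Continuous fun t => deriv (deriv U) t * (max x t - t) :=
    fun x => hU''c.mul ((continuous_const.max continuous_id).sub continuous_id)
  -- combine the integrals
  have hcomb : (∫ t in b..Mr, deriv (deriv U) t *
          (f (max u₀ t) - (f (max uB t) + f (max v₁ t)) / 2 + α * (max v₁ t - max uB t)))
      = (∫ t in b..Mr, deriv (deriv U) t * (f (max u₀ t) - f t))
        - ((∫ t in b..Mr, deriv (deriv U) t * (f (max uB t) - f t))
            + (∫ t in b..Mr, deriv (deriv U) t * (f (max v₁ t) - f t))) / 2
        + α * ((∫ t in b..Mr, deriv (deriv U) t * (max v₁ t - t))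
            - (∫ t in b..Mr, deriv (deriv U) t * (max uB t - t))) := by
    have e1 : (∫ t in b..Mr, deriv (deriv U) t *
          (f (max u₀ t) - (f (max uB t) + f (max v₁ t)) / 2 + α * (max v₁ t - max uB t)))
        = ∫ t in b..Mr, (deriv (deriv U) t * (f (max u₀ t) - f t)
            - (1/2) * (deriv (deriv U) t * (f (max uB t) - f t))
            - (1/2) * (deriv (deriv U) t * (f (max v₁ t) - f t))
            + α * (deriv (deriv U) t * (max v₁ t - t))
            - α * (deriv (deriv U) t * (max uB t - t))) := by
      apply integral_congr
      intro t _
      simp only []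
      ring
    rw [e1]
    erw [integral_sub (((((cP u₀).sub (continuous_const.mul (cP uB))).sub
        (continuous_const.mul (cP v₁))).add (continuous_const.mul (cR v₁))).intervalIntegrable _ _)
      ((continuous_const.mul (cR uB)).intervalIntegrable _ _),
      integral_add ((((cP u₀).sub (continuous_const.mul (cP uB))).sub
        (continuous_const.mul (cP v₁))).intervalIntegrable _ _)
      ((continuous_const.mul (cR v₁)).intervalIntegrable _ _),
      integral_sub (((cP u₀).sub (continuous_const.mul (cP uB))).intervalIntegrable _ _)
        ((continuous_const.mul (cP v₁)).intervalIntegrable _ _),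
      integral_sub ((cP u₀).intervalIntegrable _ _)
        ((continuous_const.mul (cP uB)).intervalIntegrable _ _),
      integral_const_mul, integral_const_mul, integral_const_mul, integral_const_mul]
    ring
  rw [hcomb]
  -- now everything is linear algebra over the five rep identities
  linear_combination r0 - rB/2 - rv/2 + α * rUv - α * rUB

lemma lax_mem_iff {f : ℝ → ℝ} (hf : ContDiff ℝ 2 f) {M lam Q : ℝ} (hM : 0 < M)
    {uB u₀ : ℝ} (huB : uB ∈ Icc (-M) M) (h0 : u₀ ∈ Icc (-M) M) :
    u₀ ∈ laxEntropySet f lam Q M uB ↔ ∃ v₁ ∈ Icc (-M) M,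
      (f u₀ - (f uB + f v₁) / 2 + Q / lam * (v₁ - uB) = 0 ∧
       ∀ t ∈ Icc (-M) M, f (max u₀ t) - (f (max uB t) + f (max v₁ t)) / 2
          + Q / lam * (max v₁ t - max uB t) ≤ 0) := by
  obtain ⟨hfd, hfd', hf''c⟩ := contDiff_two_facts hf
  have hcf : Continuous f := hfd.continuous
  have hcf' : Continuous (deriv f) := hfd'.continuous
  have hMM : (-M : ℝ) ≤ M := by linarith
  constructor
  · rintro ⟨v₁, hv₁, H⟩
    have cK : Continuous (fun t => f (max u₀ t) - (f (max uB t) + f (max v₁ t)) / 2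
        + Q / lam * (max v₁ t - max uB t)) := by
      have cmax : ∀ x : ℝ, Continuous fun t : ℝ => f (max x t) :=
        fun x => hcf.comp (continuous_const.max continuous_id)
      have cm : ∀ x : ℝ, Continuous fun t : ℝ => max x t :=
        fun x => continuous_const.max continuous_id
      exact ((cmax u₀).sub (((cmax uB).add (cmax v₁)).div_const 2)).add
        (continuous_const.mul ((cm v₁).sub (cm uB)))
    -- the two affine entropies give the flux equality
    have h1 := H (fun x => x) f contDiff_id (by simp) hfd (by simp)
    have h2 := H (fun x => -x) (fun x => -f x) (contDiff_id.neg) (by simp)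
      hfd.neg (by intro u; simp)
    have heq : f u₀ - (f uB + f v₁) / 2 + Q / lam * (v₁ - uB) = 0 := by
      linarith
    refine ⟨v₁, hv₁, heq, ?_⟩
    intro t ht
    by_contra hpos
    push_neg at hpos
    set K : ℝ → ℝ := fun t => f (max u₀ t) - (f (max uB t) + f (max v₁ t)) / 2
        + Q / lam * (max v₁ t - max uB t) with hKdef
    rcases eq_or_lt_of_le ht.1 with htM | htM
    · -- t = -M : contradiction with heq
      have : K t = 0 := by
        rw [hKdef]
        simp only [← htM]
        rw [max_eq_left h0.1, max_eq_left huB.1, max_eq_left hv₁.1]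
        exact heq
      rw [hKdef] at this; simp only [] at this hpos; linarith
    · -- interior bump construction
      obtain ⟨δ, hδ, hδball⟩ := Metric.continuousAt_iff.mp cK.continuousAt (K t) hpos
      set c : ℝ := max ((-M + t)/2) (t - δ/2) with hcdef
      have hc1 : -M < c := lt_max_of_lt_left (by linarith)
      have hcd : c < t := by
        apply max_lt <;> linarith
      have hKpos : ∀ s ∈ Icc c t, 0 < K s := by
        intro s hs
        have hdist : dist s t < δ := by
          rw [Real.dist_eq, abs_of_nonpos (by linarith [hs.2])]
          have : t - δ/2 ≤ c := le_max_right _ _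
          have := hs.1
          linarith
        have := hδball hdist
        rw [Real.dist_eq] at this
        have := abs_lt.mp this
        linarith [this.1]
      set h : ℝ → ℝ := fun s => max 0 (min (s - c) (t - s)) with hhdef
      have ch : Continuous h := continuous_const.max
        (((continuous_id.sub continuous_const)).min (continuous_const.sub continuous_id))
      have hh0 : ∀ s, 0 ≤ h s := fun s => le_max_left _ _
      set U₁ : ℝ → ℝ := fun x => ∫ s in (0:ℝ)..x, h s with hU₁def
      have hU₁d : ∀ x, HasDerivAt U₁ (h x) x :=
        fun x => (ch.integral_hasStrictDerivAt 0 x).hasDerivAt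
      have cU₁ : Continuous U₁ := by
        have : Differentiable ℝ U₁ := fun x => (hU₁d x).differentiableAt
        exact this.continuous
      set Uu : ℝ → ℝ := fun x => ∫ s in (0:ℝ)..x, U₁ s with hUudef
      have hUd : ∀ x, HasDerivAt Uu (U₁ x) x :=
        fun x => (cU₁.integral_hasStrictDerivAt 0 x).hasDerivAt
      have hderivU : deriv Uu = U₁ := funext fun x => (hUd x).deriv
      have hderivU₁ : deriv U₁ = h := funext fun x => (hU₁d x).deriv
      have hU'' : deriv (deriv Uu) = h := by rw [hderivU, hderivU₁]
      have hUC2 : ContDiff ℝ 2 Uu := by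
        rw [show (2 : WithTop ℕ∞) = 1 + 1 by norm_num, contDiff_succ_iff_deriv]
        refine ⟨fun x => (hUd x).differentiableAt, by simp, ?_⟩
        rw [hderivU, contDiff_one_iff_deriv]
        exact ⟨fun x => (hU₁d x).differentiableAt, by rw [hderivU₁]; exact ch⟩
      set Ff : ℝ → ℝ := fun x => ∫ s in (0:ℝ)..x, U₁ s * deriv f s with hFfdef
      have hFfd : ∀ x, HasDerivAt Ff (U₁ x * deriv f x) x :=
        fun x => ((cU₁.mul hcf').integral_hasStrictDerivAt 0 x).hasDerivAt
      have hFd : Differentiable ℝ Ff := fun x => (hFfd x).differentiableAt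
      have hF' : ∀ u, deriv Ff u = deriv Uu u * deriv f u := by
        intro u; rw [hderivU]; exact (hFfd u).deriv
      have hD := H Uu Ff hUC2 (by rw [hU'']; exact hh0) hFd hF'
      have hKI := key_identity hf hUC2 hFd hF' (Q/lam) h0 huB hv₁
      rw [hU'', heq, mul_zero, add_zero] at hKI
      have hIneg : (∫ s in (-M)..M, h s * K s) ≤ 0 := by
        rw [hKdef]; simp only []; rw [← hKI]; linarith
      -- split the integral and derive positivity
      have i1 : IntervalIntegrable (fun s => h s * K s) MeasureTheory.volume (-M) c :=
        (ch.mul cK).intervalIntegrable _ _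
      have i2 : IntervalIntegrable (fun s => h s * K s) MeasureTheory.volume c t :=
        (ch.mul cK).intervalIntegrable _ _
      have i3 : IntervalIntegrable (fun s => h s * K s) MeasureTheory.volume t M :=
        (ch.mul cK).intervalIntegrable _ _
      have hsplit1 := integral_add_adjacent_intervals i1 i2
      have hsplit2 := integral_add_adjacent_intervals (i1.trans i2) i3
      have z1 : (∫ s in (-M)..c, h s * K s) = 0 := by
        have : EqOn (fun s => h s * K s) (fun _ => (0:ℝ)) (uIcc (-M) c) := by
          intro s hs
          rw [uIcc_of_le hc1.le] at hs
          have : h s = 0 := by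
            rw [hhdef]; simp only []
            rw [max_eq_left]
            exact le_trans (min_le_left _ _) (by linarith [hs.2])
          simp [this]
        rw [integral_congr this]; simp
      have z3 : (∫ s in t..M, h s * K s) = 0 := by
        have : EqOn (fun s => h s * K s) (fun _ => (0:ℝ)) (uIcc t M) := by
          intro s hs
          rw [uIcc_of_le ht.2] at hs
          have : h s = 0 := by
            rw [hhdef]; simp only []
            rw [max_eq_left]
            exact le_trans (min_le_right _ _) (by linarith [hs.1])
          simp [this]
        rw [integral_congr this]; simp
      have zpos : 0 < ∫ s in c..t, h s * K s := by
        apply intervalIntegral_pos_of_pos_on i2 _ hcd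
        intro s hs
        apply mul_pos
        · rw [hhdef]; simp only []
          apply lt_max_of_lt_right
          exact lt_min (by linarith [hs.1]) (by linarith [hs.2])
        · exact hKpos s ⟨hs.1.le, hs.2.le⟩
      linarith
  · rintro ⟨v₁, hv₁, heq, hK⟩
    refine ⟨v₁, hv₁, fun U F hU hU'' hFd hF' => ?_⟩
    have hKI := key_identity hf hU hFd hF' (Q/lam) h0 huB hv₁
    rw [heq, mul_zero, add_zero] at hKI
    have h1 : 0 ≤ ∫ t in (-M)..M, -(deriv (deriv U) t *
        (f (max u₀ t) - (f (max uB t) + f (max v₁ t)) / 2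
          + Q / lam * (max v₁ t - max uB t))) := by
      apply integral_nonneg hMM
      intro u hu
      simp only [neg_nonneg]
      exact mul_nonpos_of_nonneg_of_nonpos (hU'' u) (hK u hu)
    rw [integral_neg] at h1
    linarith

lemma lip_of_deriv {f : ℝ → ℝ} (hfd : Differentiable ℝ f) {α M : ℝ}
    (hd : ∀ w ∈ Icc (-M) M, |deriv f w| ≤ α) :
    ∀ x ∈ Icc (-M) M, ∀ y ∈ Icc (-M) M, |f x - f y| ≤ α * |x - y| := by
  have core : ∀ x ∈ Icc (-M) M, ∀ y ∈ Icc (-M) M, x < y → |f y - f x| ≤ α * (y - x) := by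
    intro x hx y hy hxy
    obtain ⟨c, hc, hslope⟩ := exists_deriv_eq_slope f hxy
      (hfd.continuous.continuousOn) (hfd.differentiableOn)
    have hcmem : c ∈ Icc (-M) M := ⟨by linarith [hc.1, hx.1], by linarith [hc.2, hy.2]⟩
    have heq : f y - f x = deriv f c * (y - x) := by
      rw [hslope]
      exact (div_mul_cancel₀ _ (sub_ne_zero.mpr hxy.ne')).symm
    rw [heq, abs_mul, abs_of_pos (by linarith : (0:ℝ) < y - x)]
    exact mul_le_mul_of_nonneg_right (hd c hcmem) (by linarith)
  intro x hx y hy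
  rcases lt_trichotomy x y with h | h | h
  · rw [abs_sub_comm, abs_sub_comm x y, abs_of_pos (by linarith : (0:ℝ) < y - x)]
    exact core x hx y hy h
  · simp [h]
  · rw [abs_of_pos (by linarith : (0:ℝ) < x - y)]
    exact core y hy x hx h

-- Case: u₀ ≤ v₁ ≤ uB (Lemma C)
lemma lemC {f : ℝ → ℝ} {α M u₀ uB v₁ : ℝ} (hα : 0 ≤ α)
    (hconv : ConvexOn ℝ univ f)
    (hLip : ∀ x ∈ Icc (-M) M, ∀ y ∈ Icc (-M) M, |f x - f y| ≤ α * |x - y|)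
    (h0v : u₀ ≤ v₁) (hv1 : v₁ ≤ uB) (h0 : u₀ ∈ Icc (-M) M) (hB : uB ∈ Icc (-M) M)
    (heq : f u₀ - (f uB + f v₁) / 2 + α * (v₁ - uB) = 0) :
    ∀ t ∈ Icc (-M) M, f (max u₀ t) - (f (max uB t) + f (max v₁ t)) / 2
      + α * (max v₁ t - max uB t) ≤ 0 := by
  have hvmem : v₁ ∈ Icc (-M) M := ⟨le_trans h0.1 h0v, le_trans hv1 hB.2⟩
  intro t ht
  rcases le_total t u₀ with h | h
  · rw [max_eq_left h, max_eq_left (h.trans (h0v.trans hv1)), max_eq_left (h.trans h0v)]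
    linarith
  · rcases le_total t v₁ with h2 | h2
    · rw [max_eq_right h, max_eq_left (h2.trans hv1), max_eq_left h2]
      have hLv := hLip v₁ hvmem uB hB
      rw [abs_sub_comm v₁ uB, abs_of_nonneg (by linarith : (0:ℝ) ≤ uB - v₁)] at hLv
      have habs := abs_le.mp hLv
      have hfv : f v₁ ≤ f u₀ := by linarith [habs.1]
      have hseg : t ∈ segment ℝ u₀ v₁ := by
        rw [segment_eq_Icc h0v]; exact ⟨h, h2⟩
      have := hconv.le_on_segment (mem_univ u₀) (mem_univ v₁) hseg
      have hft : f t ≤ f u₀ := le_trans this (max_le le_rfl hfv)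
      linarith
    · rcases le_total t uB with h3 | h3
      · rw [max_eq_right h, max_eq_left h3, max_eq_right h2]
        have hLt := hLip t ht uB hB
        rw [abs_sub_comm t uB, abs_of_nonneg (by linarith : (0:ℝ) ≤ uB - t)] at hLt
        have habs := abs_le.mp hLt
        nlinarith [habs.1, mul_nonneg hα (by linarith : (0:ℝ) ≤ uB - t)]
      · rw [max_eq_right h, max_eq_right h3, max_eq_right h2]
        ring_nf
        linarith

-- Case: uB ≤ v₁ ≤ u₀ ≤ ustar (Lemma D)
lemma lemD {f : ℝ → ℝ} {α M u₀ uB v₁ ustar : ℝ}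
    (hLip : ∀ x ∈ Icc (-M) M, ∀ y ∈ Icc (-M) M, |f x - f y| ≤ α * |x - y|)
    (hdecr : AntitoneOn f (Iic ustar))
    (hBv : uB ≤ v₁) (hv0 : v₁ ≤ u₀) (h0star : u₀ ≤ ustar)
    (h0 : u₀ ∈ Icc (-M) M) (hB : uB ∈ Icc (-M) M)
    (heq : f u₀ - (f uB + f v₁) / 2 + α * (v₁ - uB) = 0) :
    ∀ t ∈ Icc (-M) M, f (max u₀ t) - (f (max uB t) + f (max v₁ t)) / 2
      + α * (max v₁ t - max uB t) ≤ 0 := by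
  intro t ht
  rcases le_total t uB with h | h
  · rw [max_eq_left (h.trans (hBv.trans hv0)), max_eq_left h, max_eq_left (h.trans hBv)]
    linarith
  · rcases le_total t v₁ with h2 | h2
    · rw [max_eq_left (h2.trans hv0), max_eq_right h, max_eq_left h2]
      have hLt := hLip uB hB t ht
      rw [abs_sub_comm uB t, abs_of_nonneg (by linarith : (0:ℝ) ≤ t - uB)] at hLt
      have habs := abs_le.mp hLt
      linarith [habs.2]
    · rcases le_total t u₀ with h3 | h3
      · rw [max_eq_left h3, max_eq_right h, max_eq_right h2]
        have hft : f u₀ ≤ f t :=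
          hdecr (le_trans h3 h0star : t ∈ Iic ustar) (h0star : u₀ ∈ Iic ustar) h3
        linarith
      · rw [max_eq_right h3, max_eq_right h, max_eq_right h2]
        ring_nf
        linarith

-- Existence of v₁ ∈ [u₀, uB] with the flux equality, when u₀ ≤ uB, f uB ≤ f u₀
lemma exC {f : ℝ → ℝ} {α M u₀ uB : ℝ} (hα : 0 ≤ α) (hcf : Continuous f)
    (hLip : ∀ x ∈ Icc (-M) M, ∀ y ∈ Icc (-M) M, |f x - f y| ≤ α * |x - y|)
    (h0B : u₀ ≤ uB) (h0 : u₀ ∈ Icc (-M) M) (hB : uB ∈ Icc (-M) M)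
    (hfB : f uB ≤ f u₀) :
    ∃ v₁, u₀ ≤ v₁ ∧ v₁ ≤ uB ∧ f u₀ - (f uB + f v₁) / 2 + α * (v₁ - uB) = 0 := by
  set φ : ℝ → ℝ := fun w => f u₀ - (f uB + f w) / 2 + α * (w - uB) with hφdef
  have hφc : ContinuousOn φ (Icc u₀ uB) :=
    ((continuous_const.sub ((continuous_const.add hcf).div_const 2)).add
      (continuous_const.mul (continuous_id.sub continuous_const))).continuousOn
  have hL := hLip u₀ h0 uB hB
  rw [abs_sub_comm u₀ uB, abs_of_nonneg (by linarith : (0:ℝ) ≤ uB - u₀)] at hL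
  have habs := abs_le.mp hL
  have hφ0 : φ u₀ ≤ 0 := by
    simp only [hφdef]
    nlinarith [habs.2, mul_nonneg hα (by linarith : (0:ℝ) ≤ uB - u₀)]
  have hφB : 0 ≤ φ uB := by simp only [hφdef]; ring_nf; linarith
  have := intermediate_value_Icc h0B hφc (by exact ⟨hφ0, hφB⟩ : (0:ℝ) ∈ Icc (φ u₀) (φ uB))
  obtain ⟨v₁, hv₁, hveq⟩ := this
  exact ⟨v₁, hv₁.1, hv₁.2, hveq⟩

-- Existence of v₁ ∈ [uB, u₀] with the flux equality, when uB ≤ u₀, f u₀ ≤ f uB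
lemma exD {f : ℝ → ℝ} {α M u₀ uB : ℝ} (hα : 0 ≤ α) (hcf : Continuous f)
    (hLip : ∀ x ∈ Icc (-M) M, ∀ y ∈ Icc (-M) M, |f x - f y| ≤ α * |x - y|)
    (hB0 : uB ≤ u₀) (h0 : u₀ ∈ Icc (-M) M) (hB : uB ∈ Icc (-M) M)
    (hfB : f u₀ ≤ f uB) :
    ∃ v₁, uB ≤ v₁ ∧ v₁ ≤ u₀ ∧ f u₀ - (f uB + f v₁) / 2 + α * (v₁ - uB) = 0 := by
  set φ : ℝ → ℝ := fun w => f u₀ - (f uB + f w) / 2 + α * (w - uB) with hφdef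
  have hφc : ContinuousOn φ (Icc uB u₀) :=
    ((continuous_const.sub ((continuous_const.add hcf).div_const 2)).add
      (continuous_const.mul (continuous_id.sub continuous_const))).continuousOn
  have hL := hLip uB hB u₀ h0
  rw [abs_sub_comm uB u₀, abs_of_nonneg (by linarith : (0:ℝ) ≤ u₀ - uB)] at hL
  have habs := abs_le.mp hL
  have hφB : φ uB ≤ 0 := by simp only [hφdef]; ring_nf; linarith
  have hφ0 : 0 ≤ φ u₀ := by
    simp only [hφdef]
    nlinarith [habs.1, mul_nonneg hα (by linarith : (0:ℝ) ≤ u₀ - uB)]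
  have := intermediate_value_Icc hB0 hφc (by exact ⟨hφB, hφ0⟩ : (0:ℝ) ∈ Icc (φ uB) (φ u₀))
  obtain ⟨v₁, hv₁, hveq⟩ := this
  exact ⟨v₁, hv₁.1, hv₁.2, hveq⟩

end LaxHelpers

/-- Theorem 4.1, part 2, Lax–Friedrichs entropy set: for a
strictly convex C² flux `f` with critical point `u_*`, `u_B ∈ [−M,M]` and CFL
condition `(λ/Q)·sup_{|w|≤8M}|f'(w)| ≤ 1`, the Lax–Friedrichs entropy set
intersected with `[−M,M]` equals `E^Riemann(u_B) ∩ [−M,M]`, where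
`E^Riemann(u_B) = (−∞, u_B^*] ∪ {u_B}` if `u_B > u_*`, and `(−∞, u_*]` if
`u_B ≤ u_*`. -/
theorem laxEntropySet_eq_riemannSet
    (f : ℝ → ℝ) (hf : ContDiff ℝ 2 f) (hf'' : ∀ u, 0 < deriv (deriv f) u)
    (ustar : ℝ) (hstar : deriv f ustar = 0)
    (M : ℝ) (hM : 0 < M) (uB : ℝ) (huB : uB ∈ Set.Icc (-M) M)
    (lam Q : ℝ) (hlam : 0 < lam) (hQ : Q ∈ Set.Ioo (0 : ℝ) 1)
    (hCFL : lam / Q * sSup ((fun w => |deriv f w|) '' Set.Icc (-(8 * M)) (8 * M)) ≤ 1) :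
    (ustar < uB → ∀ uBstar : ℝ, uBstar < ustar → f uBstar = f uB →
      laxEntropySet f lam Q M uB ∩ Set.Icc (-M) M
        = (Set.Iic uBstar ∪ {uB}) ∩ Set.Icc (-M) M) ∧
    (uB ≤ ustar →
      laxEntropySet f lam Q M uB ∩ Set.Icc (-M) M
        = Set.Iic ustar ∩ Set.Icc (-M) M) := by
  obtain ⟨hfd, hfd', hf''c⟩ := contDiff_two_facts hf
  have hcf : Continuous f := hfd.continuous
  have hcf' : Continuous (deriv f) := hfd'.continuous
  have hα : 0 < Q / lam := div_pos hQ.1 hlam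
  -- Lipschitz bound from the CFL condition
  have hd : ∀ w ∈ Set.Icc (-M) M, |deriv f w| ≤ Q / lam := by
    intro w hw
    have hw8 : w ∈ Set.Icc (-(8*M)) (8*M) := ⟨by linarith [hw.1], by linarith [hw.2]⟩
    have bdd : BddAbove ((fun w => |deriv f w|) '' Set.Icc (-(8*M)) (8*M)) :=
      (isCompact_Icc.image hcf'.abs).bddAbove
    have hle : |deriv f w| ≤ sSup ((fun w => |deriv f w|) '' Set.Icc (-(8*M)) (8*M)) :=
      le_csSup bdd ⟨w, hw8, rfl⟩
    have hS : sSup ((fun w => |deriv f w|) '' Set.Icc (-(8*M)) (8*M)) ≤ Q / lam := by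
      rw [le_div_iff₀ hlam]
      have h1 := mul_le_mul_of_nonneg_right hCFL hQ.1.le
      have h2 : lam / Q * sSup ((fun w => |deriv f w|) '' Set.Icc (-(8*M)) (8*M)) * Q
          = sSup ((fun w => |deriv f w|) '' Set.Icc (-(8*M)) (8*M)) * lam := by
        rw [div_mul_eq_mul_div, div_mul_cancel₀ _ (ne_of_gt hQ.1)]
        ring
      rw [h2] at h1
      linarith
    linarith
  have hLip := lip_of_deriv hfd hd
  have hconv : ConvexOn ℝ Set.univ f :=
    convexOn_univ_of_deriv2_nonneg hfd hfd'
      (fun x => by simpa [Function.iterate_succ_apply'] using (hf'' x).le)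
  have hf'mono : StrictMono (deriv f) := strictMono_of_deriv_pos hf''
  have hdecr : AntitoneOn f (Set.Iic ustar) := by
    apply antitoneOn_of_deriv_nonpos (convex_Iic _) hcf.continuousOn
      (hfd.differentiableOn.mono interior_subset)
    intro x hx
    rw [interior_Iic] at hx
    have := hf'mono hx
    linarith [hstar ▸ this]
  have hanti : StrictAntiOn f (Set.Iic ustar) := by
    apply strictAntiOn_of_deriv_neg (convex_Iic _) hcf.continuousOn
    intro x hx
    rw [interior_Iic] at hx
    have := hf'mono hx
    linarith [hstar ▸ this]
  have hincr : StrictMonoOn f (Set.Ici ustar) := by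
    apply strictMonoOn_of_deriv_pos (convex_Ici _) hcf.continuousOn
    intro x hx
    rw [interior_Ici] at hx
    have := hf'mono hx
    linarith [hstar ▸ this]
  -- the two standard contradictions from the discrete entropy inequalities
  have F1 : ∀ u₀ ∈ Set.Icc (-M) M, ∀ v₁ ∈ Set.Icc (-M) M,
      (f u₀ - (f uB + f v₁) / 2 + Q / lam * (v₁ - uB) = 0) →
      (∀ t ∈ Set.Icc (-M) M, f (max u₀ t) - (f (max uB t) + f (max v₁ t)) / 2
        + Q / lam * (max v₁ t - max uB t) ≤ 0) →
      ¬(v₁ < u₀ ∧ v₁ < uB) := by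
    rintro u₀ h0 v₁ hv₁ heq hK ⟨ha, hb⟩
    have hmin : v₁ < min u₀ uB := lt_min ha hb
    set s : ℝ := (v₁ + min u₀ uB)/2 with hsdef
    have hs1 : v₁ < s := by rw [hsdef]; linarith
    have hs0 : s < u₀ := by rw [hsdef]; have := min_le_left u₀ uB; linarith
    have hsB : s < uB := by rw [hsdef]; have := min_le_right u₀ uB; linarith
    have hsmem : s ∈ Set.Icc (-M) M := ⟨by linarith [hv₁.1], by linarith [h0.2]⟩
    have hKs := hK s hsmem
    rw [max_eq_left hs0.le, max_eq_left hsB.le, max_eq_right hs1.le] at hKs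
    have hL := hLip v₁ hv₁ s hsmem
    rw [abs_sub_comm v₁ s, abs_of_nonneg (by linarith : (0:ℝ) ≤ s - v₁)] at hL
    have habs := abs_le.mp hL
    nlinarith [habs.1, mul_pos hα (by linarith : (0:ℝ) < s - v₁)]
  have F2 : ∀ u₀ ∈ Set.Icc (-M) M, ∀ v₁ ∈ Set.Icc (-M) M,
      (∀ t ∈ Set.Icc (-M) M, f (max u₀ t) - (f (max uB t) + f (max v₁ t)) / 2
        + Q / lam * (max v₁ t - max uB t) ≤ 0) →
      ¬(u₀ < v₁ ∧ uB < v₁) := by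
    rintro u₀ h0 v₁ hv₁ hK ⟨ha, hb⟩
    set s : ℝ := max u₀ uB with hsdef
    have hsmem : s ∈ Set.Icc (-M) M :=
      ⟨le_trans h0.1 (le_max_left _ _), max_le h0.2 huB.2⟩
    have hsv : s < v₁ := max_lt ha hb
    have hKs := hK s hsmem
    rw [max_comm u₀ s, max_eq_left (le_max_left _ _), max_comm uB s,
      max_eq_left (le_max_right _ _), max_eq_left hsv.le] at hKs
    have hL := hLip s hsmem v₁ hv₁
    rw [abs_sub_comm s v₁, abs_of_nonneg (by linarith : (0:ℝ) ≤ v₁ - s)] at hL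
    have habs := abs_le.mp hL
    nlinarith [habs.1, mul_pos hα (by linarith : (0:ℝ) < v₁ - s)]
  -- the "v₁ = u₀" contradiction
  have Fdiag : ∀ u₀ ∈ Set.Icc (-M) M, u₀ ≠ uB →
      (f u₀ - (f uB + f u₀) / 2 + Q / lam * (u₀ - uB) = 0) → False := by
    intro u₀ h0 hne heq
    have hL := hLip u₀ h0 uB huB
    have heq' : f u₀ - f uB = -(2*(Q/lam)*(u₀ - uB)) := by linarith
    have habs : |f u₀ - f uB| = 2*(Q/lam)*|u₀ - uB| := by
      rw [heq', abs_neg, abs_mul, abs_of_nonneg (by linarith : (0:ℝ) ≤ 2*(Q/lam))]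
    have hpos : 0 < |u₀ - uB| := abs_pos.mpr (sub_ne_zero.mpr hne)
    nlinarith [mul_pos hα hpos]
  constructor
  · -- first case : ustar < uB
    intro hsB uBstar hBstar hfBstar
    ext u₀
    simp only [Set.mem_inter_iff, Set.mem_union, Set.mem_singleton_iff, Set.mem_Iic]
    constructor
    · rintro ⟨hmem, hIcc⟩
      refine ⟨?_, hIcc⟩
      rw [lax_mem_iff hf hM huB hIcc] at hmem
      obtain ⟨v₁, hv₁, heq, hK⟩ := hmem
      by_contra hcon
      push_neg at hcon
      obtain ⟨h1, h2⟩ := hcon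
      rcases le_or_gt u₀ ustar with h0s | h0s
      · -- uBstar < u₀ ≤ ustar < uB : contradiction via f u₀ < f uB and v₁ ≤ uB
        have hfu : f u₀ < f uB := by
          rw [← hfBstar]
          exact hanti (by simp only [Set.mem_Iic]; linarith : uBstar ∈ Set.Iic ustar)
            (by simp only [Set.mem_Iic]; linarith : u₀ ∈ Set.Iic ustar) h1
        have hvle : v₁ ≤ uB := by
          by_contra hh
          push_neg at hh
          exact F2 u₀ hIcc v₁ hv₁ hK ⟨by linarith, hh⟩
        have hL := hLip v₁ hv₁ uB huB
        rw [abs_sub_comm v₁ uB, abs_of_nonneg (by linarith : (0:ℝ) ≤ uB - v₁)] at hL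
        have habs := abs_le.mp hL
        nlinarith [habs.1, mul_nonneg hα.le (by linarith : (0:ℝ) ≤ uB - v₁)]
      · -- ustar < u₀
        rcases lt_trichotomy v₁ u₀ with hv | hv | hv
        · have hBv : uB ≤ v₁ := by
            by_contra hh
            push_neg at hh
            exact F1 u₀ hIcc v₁ hv₁ heq hK ⟨hv, hh⟩
          have hKv := hK v₁ hv₁
          rw [max_eq_left hv.le, max_eq_right hBv, max_self] at hKv
          have : f v₁ < f u₀ :=
            hincr (by simp only [Set.mem_Ici]; linarith : v₁ ∈ Set.Ici ustar)
              (by simp only [Set.mem_Ici]; linarith : u₀ ∈ Set.Ici ustar) hv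
          linarith
        · rw [hv] at heq
          exact Fdiag u₀ hIcc h2 heq
        · rcases le_or_gt v₁ uB with hvB | hvB
          · have hf1 : f u₀ < f v₁ :=
              hincr (by simp only [Set.mem_Ici]; linarith : u₀ ∈ Set.Ici ustar)
                (by simp only [Set.mem_Ici]; linarith : v₁ ∈ Set.Ici ustar) hv
            have hf2 : f u₀ < f uB :=
              hincr (by simp only [Set.mem_Ici]; linarith : u₀ ∈ Set.Ici ustar)
                (by simp only [Set.mem_Ici]; linarith : uB ∈ Set.Ici ustar)
                (by linarith)
            nlinarith [mul_nonneg hα.le (by linarith : (0:ℝ) ≤ uB - v₁)]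
          · exact F2 u₀ hIcc v₁ hv₁ hK ⟨hv, hvB⟩
    · rintro ⟨hR, hIcc⟩
      refine ⟨?_, hIcc⟩
      rw [lax_mem_iff hf hM huB hIcc]
      rcases hR with h0star | h0B
      · have h1 : u₀ ≤ uB := by linarith
        have hfB : f uB ≤ f u₀ := by
          rw [← hfBstar]
          exact hdecr (by simp only [Set.mem_Iic]; linarith : u₀ ∈ Set.Iic ustar)
            (by simp only [Set.mem_Iic]; linarith : uBstar ∈ Set.Iic ustar) h0star
        obtain ⟨v₁, hv1, hv2, heq⟩ := exC hα.le hcf hLip h1 hIcc huB hfB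
        exact ⟨v₁, ⟨by linarith [hIcc.1], by linarith [huB.2]⟩, heq,
          lemC hα.le hconv hLip hv1 hv2 hIcc huB heq⟩
      · refine ⟨uB, huB, by rw [h0B]; ring, ?_⟩
        intro t ht
        rw [h0B]
        have : f (max uB t) - (f (max uB t) + f (max uB t)) / 2
            + Q / lam * (max uB t - max uB t) = 0 := by ring
        linarith
  · -- second case : uB ≤ ustar
    intro hsB
    ext u₀
    simp only [Set.mem_inter_iff, Set.mem_Iic]
    constructor
    · rintro ⟨hmem, hIcc⟩
      refine ⟨?_, hIcc⟩
      rw [lax_mem_iff hf hM huB hIcc] at hmem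
      obtain ⟨v₁, hv₁, heq, hK⟩ := hmem
      by_contra h0s
      push_neg at h0s
      have hBv : uB ≤ v₁ := by
        by_contra hh
        push_neg at hh
        exact F1 u₀ hIcc v₁ hv₁ heq hK ⟨by linarith, hh⟩
      have hvu : v₁ ≤ u₀ := by
        by_contra hh
        push_neg at hh
        exact F2 u₀ hIcc v₁ hv₁ hK ⟨hh, by linarith⟩
      rcases eq_or_lt_of_le hvu with hv | hv
      · rw [hv] at heq
        exact Fdiag u₀ hIcc (by intro hh; rw [hh] at h0s; linarith) heq
      · set s : ℝ := max v₁ ustar with hsdef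
        have hsmem : s ∈ Set.Icc (-M) M :=
          ⟨le_trans hv₁.1 (le_max_left _ _), max_le hv₁.2 (by linarith [hIcc.2])⟩
        have hsu : s < u₀ := max_lt hv h0s
        have hKs := hK s hsmem
        rw [max_eq_left hsu.le, max_eq_right (le_trans hBv (le_max_left _ _)),
          max_eq_right (le_max_left _ _)] at hKs
        have : f s < f u₀ :=
          hincr (by simp only [Set.mem_Ici]; exact le_max_right _ _ : s ∈ Set.Ici ustar)
            (by simp only [Set.mem_Ici]; linarith : u₀ ∈ Set.Ici ustar) hsu
        linarith
    · rintro ⟨h0star, hIcc⟩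
      refine ⟨?_, hIcc⟩
      rw [lax_mem_iff hf hM huB hIcc]
      rcases le_total uB u₀ with h1 | h1
      · have hfB : f u₀ ≤ f uB :=
          hdecr (by simp only [Set.mem_Iic]; linarith : uB ∈ Set.Iic ustar)
            (by simp only [Set.mem_Iic]; linarith : u₀ ∈ Set.Iic ustar) h1
        obtain ⟨v₁, hv1, hv2, heq⟩ := exD hα.le hcf hLip h1 hIcc huB hfB
        exact ⟨v₁, ⟨by linarith [huB.1], by linarith [hIcc.2]⟩, heq,
          lemD hLip hdecr hv1 hv2 h0star hIcc huB heq⟩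
      · have hfB : f uB ≤ f u₀ :=
          hdecr (by simp only [Set.mem_Iic]; linarith : u₀ ∈ Set.Iic ustar)
            (by simp only [Set.mem_Iic]; linarith : uB ∈ Set.Iic ustar) h1
        obtain ⟨v₁, hv1, hv2, heq⟩ := exC hα.le hcf hLip h1 hIcc huB hfB
        exact ⟨v₁, ⟨by linarith [hIcc.1], by linarith [huB.2]⟩, heq,
          lemC hα.le hconv hLip hv1 hv2 hIcc huB heq⟩
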